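/- Let B, B̂ ∈ ℝ^{d×d} with ‖B − B̂‖₂ ≤ δ, and let X ∈ ℝ^{n×d} be a matrix with rows x_1, …, x_n. Define for each i the attention rows a_iᵀ = Softmax(x_iᵀ B Xᵀ / √d) and â_iᵀ = Softmax(x_iᵀ B̂ Xᵀ / √d). Then for every i, ‖a_i − â_i‖₂ ≤ δ ‖X‖_{∞,2}² / √d. -/

import Mathlib

open scoped BigOperators ENNReal

/-- Softmax map on `ℝⁿ`. -/
noncomputable def softmax {n : ℕ} (x : Fin n → ℝ) : Fin n → ℝ :=
  fun i => Real.exp (x i) / ∑ j, Real.exp (x j)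

/-- Euclidean norm on `ℝⁿ`. -/
noncomputable def l2norm {n : ℕ} (x : Fin n → ℝ) : ℝ :=
  Real.sqrt (∑ i, x i ^ 2)

/-- Supremum norm on `ℝⁿ`. -/
noncomputable def linftyNorm {n : ℕ} (x : Fin n → ℝ) : ℝ :=
  ⨆ i, |x i|

/-- Spectral norm (operator norm w.r.t. Euclidean norms) of a real matrix. -/
noncomputable def matrixSpectralNorm {m n : ℕ} (A : Matrix (Fin m) (Fin n) ℝ) : ℝ :=
  sSup { r | ∃ x : Fin n → ℝ, l2norm x ≤ 1 ∧ r = l2norm (A.mulVec x) }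

/-- Smallest singular value of a square real matrix. -/
noncomputable def sigmaMin {d : ℕ} (W : Matrix (Fin d) (Fin d) ℝ) : ℝ :=
  sInf { r | ∃ x : Fin d → ℝ, l2norm x = 1 ∧ r = l2norm (W.mulVec x) }

/-- `‖X‖_{∞,2}`: the maximum Euclidean norm of a row of `X`. -/
noncomputable def maxRowNorm {n d : ℕ} (X : Matrix (Fin n) (Fin d) ℝ) : ℝ :=
  ⨆ i, l2norm (X i)

lemma l2norm_nonneg {n : ℕ} (x : Fin n → ℝ) : 0 ≤ l2norm x := Real.sqrt_nonneg _

lemma abs_dotProduct_le {n : ℕ} (x y : Fin n → ℝ) :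
    |dotProduct x y| ≤ l2norm x * l2norm y := by
  rw [← Real.sqrt_sq_eq_abs, l2norm, l2norm, ← Real.sqrt_mul (by positivity)]
  exact Real.sqrt_le_sqrt (Finset.sum_mul_sq_le_sq_mul_sq _ _ _)

lemma l2norm_smul {n : ℕ} (a : ℝ) (x : Fin n → ℝ) : l2norm (a • x) = |a| * l2norm x := by
  simp only [l2norm, Pi.smul_apply, smul_eq_mul, mul_pow]
  rw [← Finset.mul_sum, Real.sqrt_mul (sq_nonneg a), Real.sqrt_sq_eq_abs]

lemma matrixSpectralNorm_bddAbove {m n : ℕ} (A : Matrix (Fin m) (Fin n) ℝ) :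
    BddAbove { r | ∃ x : Fin n → ℝ, l2norm x ≤ 1 ∧ r = l2norm (A.mulVec x) } := by
  refine ⟨Real.sqrt (∑ i, ∑ j, A i j ^ 2), ?_⟩
  rintro r ⟨x, hx, rfl⟩
  unfold l2norm at hx
  have hx2 : ∑ j, x j ^ 2 ≤ 1 := by
    have h0 : (0:ℝ) ≤ ∑ j, x j ^ 2 := by positivity
    nlinarith [Real.sq_sqrt h0, Real.sqrt_nonneg (∑ j, x j ^ 2), hx]
  unfold l2norm
  apply Real.sqrt_le_sqrt
  calc ∑ i, (A.mulVec x i) ^ 2 ≤ ∑ i, ((∑ j, A i j ^ 2) * ∑ j, x j ^ 2) := by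
        refine Finset.sum_le_sum fun i _ => ?_
        have : A.mulVec x i = ∑ j, A i j * x j := rfl
        rw [this]
        exact Finset.sum_mul_sq_le_sq_mul_sq _ _ _
    _ ≤ ∑ i, ∑ j, A i j ^ 2 := by
        refine Finset.sum_le_sum fun i _ => ?_
        have : (0:ℝ) ≤ ∑ j, A i j ^ 2 := by positivity
        nlinarith

lemma matrixSpectralNorm_nonneg {m n : ℕ} (A : Matrix (Fin m) (Fin n) ℝ) : 0 ≤ matrixSpectralNorm A := by
  apply le_csSup (matrixSpectralNorm_bddAbove A)
  exact ⟨0, by simp [l2norm], by simp [l2norm, Matrix.mulVec_zero]⟩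

lemma l2norm_mulVec_le {m n : ℕ} (A : Matrix (Fin m) (Fin n) ℝ) (x : Fin n → ℝ) :
    l2norm (A.mulVec x) ≤ matrixSpectralNorm A * l2norm x := by
  rcases eq_or_ne (l2norm x) 0 with h0 | h0
  · have hs : ∑ j, x j ^ 2 = 0 :=
      le_antisymm (Real.sqrt_eq_zero'.mp h0) (by positivity)
    have hx : x = 0 := by
      funext j
      have := (Finset.sum_eq_zero_iff_of_nonneg (fun j _ => sq_nonneg (x j))).mp hs j
        (Finset.mem_univ j)
      exact pow_eq_zero_iff (two_ne_zero) |>.mp this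
    subst hx
    simp [h0, Matrix.mulVec_zero, l2norm]
  · have hc : 0 < l2norm x := lt_of_le_of_ne (Real.sqrt_nonneg _) (Ne.symm h0)
    have hmem : l2norm (A.mulVec ((l2norm x)⁻¹ • x)) ∈
        { r | ∃ y : Fin n → ℝ, l2norm y ≤ 1 ∧ r = l2norm (A.mulVec y) } := by
      refine ⟨_, ?_, rfl⟩
      rw [l2norm_smul, abs_inv, abs_of_pos hc, inv_mul_cancel₀ hc.ne']
    have := le_csSup (matrixSpectralNorm_bddAbove A) hmem
    rw [Matrix.mulVec_smul, l2norm_smul, abs_inv, abs_of_pos hc] at this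
    rw [mul_comm]
    calc l2norm (A.mulVec x) = l2norm x * ((l2norm x)⁻¹ * l2norm (A.mulVec x)) := by
          field_simp
      _ ≤ l2norm x * matrixSpectralNorm A := by
          exact mul_le_mul_of_nonneg_left this hc.le


lemma softmax_diff_le {n : ℕ} (u v : Fin n → ℝ) {ε : ℝ} (hε : 0 ≤ ε)
    (h : ∀ j, |u j - v j| ≤ ε) : l2norm (softmax u - softmax v) ≤ ε := by
  rcases Nat.eq_zero_or_pos n with rfl | hn
  · simpa [l2norm] using hε
  haveI : Nonempty (Fin n) := Fin.pos_iff_nonempty.mp hn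
  set Δ : Fin n → ℝ := fun j => u j - v j with hΔdef
  set w : ℝ → Fin n → ℝ := fun t j => v j + t * Δ j with hwdef
  set S : ℝ → ℝ := fun t => ∑ j, Real.exp (w t j) with hSdef
  have hS : ∀ t, 0 < S t := fun t =>
    Finset.sum_pos (fun j _ => Real.exp_pos _) Finset.univ_nonempty
  set p : ℝ → Fin n → ℝ := fun t j => Real.exp (w t j) / S t with hpdef
  set m : ℝ → ℝ := fun t => ∑ k, p t k * Δ k with hmdef
  set f : ℝ → EuclideanSpace ℝ (Fin n) :=
    fun t => (WithLp.equiv 2 (Fin n → ℝ)).symm (softmax (w t)) with hfdef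
  set f' : ℝ → EuclideanSpace ℝ (Fin n) :=
    fun t => (WithLp.equiv 2 (Fin n → ℝ)).symm (fun j => p t j * (Δ j - m t)) with hf'def
  -- probability facts
  have hp0 : ∀ t j, 0 ≤ p t j := fun t j => le_of_lt (div_pos (Real.exp_pos _) (hS t))
  have hp1 : ∀ t j, p t j ≤ 1 := by
    intro t j
    rw [hpdef, div_le_one (hS t)]
    exact Finset.single_le_sum (fun k _ => (Real.exp_pos (w t k)).le) (Finset.mem_univ j)
  have hpsum : ∀ t, ∑ j, p t j = 1 := by
    intro t
    rw [hpdef, ← Finset.sum_div, div_self (hS t).ne']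
  -- derivative
  have hderiv : ∀ t : ℝ, HasDerivAt f (f' t) t := by
    intro t
    have hgw : ∀ j, HasDerivAt (fun s => w s j) (Δ j) t := by
      intro j
      exact (hasDerivAt_mul_const (Δ j)).const_add (v j)
    have hE : ∀ j, HasDerivAt (fun s => Real.exp (w s j)) (Real.exp (w t j) * Δ j) t :=
      fun j => (hgw j).exp
    have hSd : HasDerivAt S (∑ j, Real.exp (w t j) * Δ j) t := by
      rw [hSdef]
      exact HasDerivAt.fun_sum fun j _ => hE j
    have hcoord : ∀ j, HasDerivAt (fun s => softmax (w s) j) (p t j * (Δ j - m t)) t := by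
      intro j
      have hd := (hE j).div hSd (hS t).ne'
      have hm' : m t = (∑ k, Real.exp (w t k) * Δ k) / S t := by
        rw [Finset.sum_div]
        exact Finset.sum_congr rfl fun k _ => div_mul_eq_mul_div _ _ _
      refine hd.congr_deriv (Eq.symm ?_)
      rw [hm']
      have hSne : S t ≠ 0 := (hS t).ne'
      show Real.exp (w t j) / S t * (Δ j - (∑ k, Real.exp (w t k) * Δ k) / S t) = _
      generalize Real.exp (w t j) = a
      generalize (∑ k, Real.exp (w t k) * Δ k) = M
      field_simp
    have hg : HasDerivAt (fun s => softmax (w s)) (fun j => p t j * (Δ j - m t)) t :=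
      hasDerivAt_pi.mpr hcoord
    exact ((PiLp.continuousLinearEquiv 2 ℝ (fun _ : Fin n => ℝ)).symm.toContinuousLinearMap.hasFDerivAt).comp_hasDerivAt t hg
  -- norm bound on derivative
  have hbound : ∀ t : ℝ, ‖f' t‖ ≤ ε := by
    intro t
    have hnorm : ‖f' t‖ = Real.sqrt (∑ j, (p t j * (Δ j - m t)) ^ 2) := by
      rw [EuclideanSpace.norm_eq]
      congr 1
      refine Finset.sum_congr rfl fun j _ => ?_
      rw [Real.norm_eq_abs, sq_abs]
      rfl
    rw [hnorm]
    have key : ∑ j, (p t j * (Δ j - m t)) ^ 2 ≤ ε ^ 2 := by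
      have step1 : ∑ j, (p t j * (Δ j - m t)) ^ 2 ≤ ∑ j, p t j * (Δ j - m t) ^ 2 := by
        refine Finset.sum_le_sum fun j _ => ?_
        have : p t j ^ 2 ≤ p t j := by nlinarith [hp0 t j, hp1 t j]
        nlinarith [sq_nonneg (Δ j - m t), hp0 t j]
      have expand : ∑ j, p t j * (Δ j - m t) ^ 2
          = (∑ j, p t j * Δ j ^ 2) - m t ^ 2 := by
        have e1 : ∑ j, p t j * (Δ j - m t) ^ 2
            = (∑ j, p t j * Δ j ^ 2) - 2 * m t * (∑ j, p t j * Δ j)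
              + m t ^ 2 * (∑ j, p t j) := by
          calc ∑ j, p t j * (Δ j - m t) ^ 2
              = ∑ j, ((p t j * Δ j ^ 2 - 2 * m t * (p t j * Δ j)) + m t ^ 2 * p t j) :=
                Finset.sum_congr rfl fun j _ => by ring
            _ = (∑ j, (p t j * Δ j ^ 2 - 2 * m t * (p t j * Δ j)))
                + ∑ j, m t ^ 2 * p t j := Finset.sum_add_distrib
            _ = ((∑ j, p t j * Δ j ^ 2) - ∑ j, 2 * m t * (p t j * Δ j))
                + ∑ j, m t ^ 2 * p t j := by rw [Finset.sum_sub_distrib]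
            _ = (∑ j, p t j * Δ j ^ 2) - 2 * m t * (∑ j, p t j * Δ j)
                + m t ^ 2 * (∑ j, p t j) := by
                  rw [← Finset.mul_sum, ← Finset.mul_sum]
        have e2 : ∑ j, p t j * Δ j = m t := rfl
        rw [e1, hpsum t, e2]
        ring
      have step2 : (∑ j, p t j * Δ j ^ 2) ≤ ε ^ 2 := by
        calc ∑ j, p t j * Δ j ^ 2 ≤ ∑ j, p t j * ε ^ 2 := by
              refine Finset.sum_le_sum fun j _ => ?_
              have hj : Δ j ^ 2 ≤ ε ^ 2 := by
                have h1 := abs_le.mp (h j)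
                have h2 : Δ j = u j - v j := rfl
                rw [h2]
                exact sq_le_sq' h1.1 h1.2
              exact mul_le_mul_of_nonneg_left hj (hp0 t j)
          _ = ε ^ 2 := by rw [← Finset.sum_mul, hpsum t, one_mul]
      nlinarith [sq_nonneg (m t), step1, expand, step2]
    calc Real.sqrt (∑ j, (p t j * (Δ j - m t)) ^ 2) ≤ Real.sqrt (ε ^ 2) :=
          Real.sqrt_le_sqrt key
      _ = ε := Real.sqrt_sq hε
  -- MVT
  have hmvt : ‖f 1 - f 0‖ ≤ ε :=
    norm_image_sub_le_of_norm_deriv_le_segment_01'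
      (fun t _ => (hderiv t).hasDerivWithinAt) (fun t _ => hbound t)
  have hw1 : w 1 = u := by funext j; simp [hwdef, hΔdef]
  have hw0 : w 0 = v := by funext j; simp [hwdef]
  have hfin : ‖f 1 - f 0‖ = l2norm (softmax u - softmax v) := by
    rw [EuclideanSpace.norm_eq, l2norm]
    congr 1
    refine Finset.sum_congr rfl fun j _ => ?_
    rw [Real.norm_eq_abs, sq_abs]
    simp [hfdef, hw1, hw0]
  rw [← hfin]
  exact hmvt


lemma l2norm_row_le_maxRowNorm {n d : ℕ} (X : Matrix (Fin n) (Fin d) ℝ) (j : Fin n) :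
    l2norm (X j) ≤ maxRowNorm X :=
  le_ciSup (Set.finite_range fun i => l2norm (X i)).bddAbove j

/-- if `‖B − B̂‖₂ ≤ δ`, then the attention rows
`a_iᵀ = Softmax(x_iᵀ B Xᵀ/√d)` and `â_iᵀ = Softmax(x_iᵀ B̂ Xᵀ/√d)` satisfy
`‖a_i − â_i‖₂ ≤ δ ‖X‖_{∞,2}² / √d`. -/
theorem attention_rows_error_bound {n d : ℕ} (B Bhat : Matrix (Fin d) (Fin d) ℝ)
    (X : Matrix (Fin n) (Fin d) ℝ) (δ : ℝ)
    (hB : matrixSpectralNorm (B - Bhat) ≤ δ) (i : Fin n) :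
    l2norm
      ((softmax fun j => dotProduct (X i) (B.mulVec (X j)) / Real.sqrt d) -
        (softmax fun j => dotProduct (X i) (Bhat.mulVec (X j)) / Real.sqrt d))
      ≤ δ * maxRowNorm X ^ 2 / Real.sqrt d := by
  rcases Nat.eq_zero_or_pos d with rfl | hd
  · simp only [Nat.cast_zero, Real.sqrt_zero, div_zero]
    simp [l2norm, sub_self]
  have hsd : 0 < Real.sqrt d := Real.sqrt_pos.mpr (by exact_mod_cast hd)
  have hδ : 0 ≤ δ := le_trans (matrixSpectralNorm_nonneg _) hB
  have hM : ∀ j, l2norm (X j) ≤ maxRowNorm X := l2norm_row_le_maxRowNorm X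
  have hM0 : 0 ≤ maxRowNorm X := le_trans (l2norm_nonneg (X i)) (hM i)
  apply softmax_diff_le _ _
    (div_nonneg (mul_nonneg hδ (by positivity)) hsd.le)
  intro j
  rw [div_sub_div_same, abs_div, abs_of_pos hsd]
  have key : |dotProduct (X i) (B.mulVec (X j)) -
      dotProduct (X i) (Bhat.mulVec (X j))| ≤ δ * maxRowNorm X ^ 2 := by
    rw [← dotProduct_sub, ← Matrix.sub_mulVec]
    calc |dotProduct (X i) ((B - Bhat).mulVec (X j))|
        ≤ l2norm (X i) * l2norm ((B - Bhat).mulVec (X j)) := abs_dotProduct_le _ _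
      _ ≤ l2norm (X i) * (matrixSpectralNorm (B - Bhat) * l2norm (X j)) :=
          mul_le_mul_of_nonneg_left (l2norm_mulVec_le _ _) (l2norm_nonneg _)
      _ ≤ maxRowNorm X * (δ * maxRowNorm X) := by
          apply mul_le_mul (hM i) _ _ hM0
          · exact mul_le_mul hB (hM j) (l2norm_nonneg _) hδ
          · exact mul_nonneg (matrixSpectralNorm_nonneg _) (l2norm_nonneg _)
      _ = δ * maxRowNorm X ^ 2 := by ring
  exact div_le_div_of_nonneg_right key hsd.le
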